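/- Let χ₁ and χ₂ be signed permutation matrices. Then the block antidiagonal patterns [[0,0,0,χ₁],[0,0,χ₂,0],[0,χ₂ᵗ,0,0],[χ₁ᵗ,0,0,0]] and [[0,0,0,χ₁],[0,0,−χ₂,0],[0,−χ₂ᵗ,0,0],[χ₁ᵗ,0,0,0]] are I-Wilf equivalent: for every n ≥ 1, the number of signed involutions in SI_n avoiding the first pattern equals the number avoiding the second. -/

import Mathlib

open Matrix

/-- A signed permutation matrix: entries in {0,1,-1}, with exactly one nonzero
entry in each row and each column. -/
def IsSignedPermMatrix {n : ℕ} (M : Matrix (Fin n) (Fin n) ℤ) : Prop :=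
  (∀ i j, M i j = 0 ∨ M i j = 1 ∨ M i j = -1) ∧
  (∀ i, ∃! j, M i j ≠ 0) ∧
  (∀ j, ∃! i, M i j ≠ 0)

/-- `M` contains the pattern `τ`: some `k×k` submatrix of `M`, taken with rows
and columns in increasing order, equals `τ`. -/
def ContainsPattern {n k : ℕ} (M : Matrix (Fin n) (Fin n) ℤ)
    (τ : Matrix (Fin k) (Fin k) ℤ) : Prop :=
  ∃ r c : Fin k → Fin n, StrictMono r ∧ StrictMono c ∧
    ∀ a b, M (r a) (c b) = τ a b

/-- Block diagonal matrix [[A,0],[0,B]]. -/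
def blockDiag2 {a b : ℕ} (A : Matrix (Fin a) (Fin a) ℤ) (B : Matrix (Fin b) (Fin b) ℤ) :
    Matrix (Fin (a + b)) (Fin (a + b)) ℤ :=
  Matrix.reindex finSumFinEquiv finSumFinEquiv
    (Matrix.fromBlocks A (0 : Matrix (Fin a) (Fin b) ℤ) (0 : Matrix (Fin b) (Fin a) ℤ) B)

/-- Block diagonal matrix with three blocks. -/
def blockDiag3 {a b c : ℕ} (A : Matrix (Fin a) (Fin a) ℤ) (B : Matrix (Fin b) (Fin b) ℤ)
    (C : Matrix (Fin c) (Fin c) ℤ) : Matrix (Fin (a + b + c)) (Fin (a + b + c)) ℤ :=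
  blockDiag2 (blockDiag2 A B) C

/-- Block antidiagonal matrix [[0,A],[B,0]]. -/
def antiBlock2 {a b : ℕ} (A : Matrix (Fin a) (Fin a) ℤ) (B : Matrix (Fin b) (Fin b) ℤ) :
    Matrix (Fin (a + b)) (Fin (a + b)) ℤ :=
  Matrix.reindex finSumFinEquiv (finSumFinEquiv.trans (finCongr (Nat.add_comm b a)))
    (Matrix.fromBlocks (0 : Matrix (Fin a) (Fin b) ℤ) A B (0 : Matrix (Fin b) (Fin a) ℤ))

/-- For a signed permutation matrix σ, the involution σ' = [[0,σ],[σᵗ,0]]. -/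
def primePat {k : ℕ} (σ : Matrix (Fin k) (Fin k) ℤ) :
    Matrix (Fin (k + k)) (Fin (k + k)) ℤ :=
  Matrix.reindex finSumFinEquiv finSumFinEquiv
    (Matrix.fromBlocks (0 : Matrix (Fin k) (Fin k) ℤ) σ σ.transpose
      (0 : Matrix (Fin k) (Fin k) ℤ))

/-- For a signed permutation matrix σ, the involution σ'' = [[0,0,σ],[0,1,0],[σᵗ,0,0]]. -/
def doublePrimePat {k : ℕ} (σ : Matrix (Fin k) (Fin k) ℤ) :
    Matrix (Fin (k + (1 + k))) (Fin (k + (1 + k))) ℤ :=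
  Matrix.reindex ((Equiv.sumCongr (Equiv.refl (Fin k)) finSumFinEquiv).trans finSumFinEquiv)
    ((Equiv.sumCongr (Equiv.refl (Fin k)) finSumFinEquiv).trans finSumFinEquiv)
    (Matrix.fromBlocks
      (0 : Matrix (Fin k) (Fin k) ℤ)
      (Matrix.of fun (i : Fin k) (j : Fin 1 ⊕ Fin k) =>
        Sum.elim (fun _ => (0 : ℤ)) (fun j' => σ i j') j)
      (Matrix.of fun (i : Fin 1 ⊕ Fin k) (j : Fin k) =>
        Sum.elim (fun _ => (0 : ℤ)) (fun i' => σ.transpose i' j) i)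
      (Matrix.fromBlocks (1 : Matrix (Fin 1) (Fin 1) ℤ) 0 0 (0 : Matrix (Fin k) (Fin k) ℤ)))

/-- β_k, the antidiagonal k×k permutation matrix (pattern k(k-1)…1). -/
def betaMat (k : ℕ) : Matrix (Fin k) (Fin k) ℤ :=
  Matrix.of fun i j => if (i : ℕ) + (j : ℕ) + 1 = k then 1 else 0

/-- |SI_n(τ)|: the number of τ-avoiding signed involutions of size n. -/
noncomputable def SIAvoidCount (n : ℕ) {k : ℕ} (τ : Matrix (Fin k) (Fin k) ℤ) : ℕ :=
  {M : Matrix (Fin n) (Fin n) ℤ |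
    IsSignedPermMatrix M ∧ M.IsSymm ∧ ¬ ContainsPattern M τ}.ncard

/-- |B_n(τ)|: the number of τ-avoiding signed permutations of size n. -/
noncomputable def BAvoidCount (n : ℕ) {k : ℕ} (τ : Matrix (Fin k) (Fin k) ℤ) : ℕ :=
  {M : Matrix (Fin n) (Fin n) ℤ | IsSignedPermMatrix M ∧ ¬ ContainsPattern M τ}.ncard

namespace Stmt13Aux

/-- column embedding: left part (value `t`). -/
def cL {a b : ℕ} (t : Fin b) : Fin (a + b) := ⟨t.val, by omega⟩
/-- column embedding: right part (value `b + q`). -/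
def cR {a b : ℕ} (q : Fin a) : Fin (a + b) := ⟨b + q.val, by omega⟩

lemma row_split {l m : ℕ} (i : Fin (l + m)) :
    (∃ p : Fin l, i = Fin.castAdd m p) ∨ ∃ s : Fin m, i = Fin.natAdd l s := by
  rcases lt_or_ge i.val l with h | h
  · exact Or.inl ⟨⟨i.val, h⟩, by ext; simp⟩
  · exact Or.inr ⟨⟨i.val - l, by omega⟩, by ext; simp; omega⟩

lemma col_split {a b : ℕ} (j : Fin (a + b)) :
    (∃ t : Fin b, j = cL t) ∨ ∃ q : Fin a, j = cR q := by
  rcases lt_or_ge j.val b with h | h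
  · exact Or.inl ⟨⟨j.val, h⟩, by ext; simp [cL]⟩
  · exact Or.inr ⟨⟨j.val - b, by omega⟩, by ext; simp [cR]; omega⟩

lemma cL_eq {a b : ℕ} (t : Fin b) :
    (cL t : Fin (a + b)) = finCongr (Nat.add_comm b a) (Fin.castAdd a t) := by
  ext; simp [cL]

lemma cR_eq {a b : ℕ} (q : Fin a) :
    (cR q : Fin (a + b)) = finCongr (Nat.add_comm b a) (Fin.natAdd b q) := by
  ext; simp [cR]; omega

section abApply
variable {a b : ℕ} (A : Matrix (Fin a) (Fin a) ℤ) (B : Matrix (Fin b) (Fin b) ℤ)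

lemma ab_apply₁ (p : Fin a) (q : Fin a) :
    antiBlock2 A B (Fin.castAdd b p) (cR q) = A p q := by
  rw [cR_eq]
  simp [antiBlock2, Matrix.reindex_apply, Matrix.submatrix_apply]

lemma ab_apply₂ (s : Fin b) (t : Fin b) :
    antiBlock2 A B (Fin.natAdd a s) (cL t) = B s t := by
  rw [cL_eq]
  simp [antiBlock2, Matrix.reindex_apply, Matrix.submatrix_apply]

lemma ab_apply₃ (p : Fin a) (t : Fin b) :
    antiBlock2 A B (Fin.castAdd b p) (cL t) = 0 := by
  rw [cL_eq]
  simp [antiBlock2, Matrix.reindex_apply, Matrix.submatrix_apply]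

lemma ab_apply₄ (s : Fin b) (q : Fin a) :
    antiBlock2 A B (Fin.natAdd a s) (cR q) = 0 := by
  rw [cR_eq]
  simp [antiBlock2, Matrix.reindex_apply, Matrix.submatrix_apply]

end abApply

section ppApply
variable {k : ℕ} (σ : Matrix (Fin k) (Fin k) ℤ)

lemma pp_apply₁₂ (i j : Fin k) :
    primePat σ (Fin.castAdd k i) (Fin.natAdd k j) = σ i j := by
  rw [primePat, Matrix.reindex_apply, Matrix.submatrix_apply,
    finSumFinEquiv_symm_apply_castAdd, finSumFinEquiv_symm_apply_natAdd,
    Matrix.fromBlocks_apply₁₂]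

lemma pp_apply₂₁ (i j : Fin k) :
    primePat σ (Fin.natAdd k i) (Fin.castAdd k j) = σ j i := by
  rw [primePat, Matrix.reindex_apply, Matrix.submatrix_apply,
    finSumFinEquiv_symm_apply_castAdd, finSumFinEquiv_symm_apply_natAdd,
    Matrix.fromBlocks_apply₂₁, Matrix.transpose_apply]

lemma pp_apply₁₁ (i j : Fin k) :
    primePat σ (Fin.castAdd k i) (Fin.castAdd k j) = 0 := by
  rw [primePat, Matrix.reindex_apply, Matrix.submatrix_apply,
    finSumFinEquiv_symm_apply_castAdd, finSumFinEquiv_symm_apply_castAdd,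
    Matrix.fromBlocks_apply₁₁]
  rfl

lemma pp_apply₂₂ (i j : Fin k) :
    primePat σ (Fin.natAdd k i) (Fin.natAdd k j) = 0 := by
  rw [primePat, Matrix.reindex_apply, Matrix.submatrix_apply,
    finSumFinEquiv_symm_apply_natAdd, finSumFinEquiv_symm_apply_natAdd,
    Matrix.fromBlocks_apply₂₂]
  rfl

end ppApply

/-- glue along a row split at `l`. -/
def gR {l m n : ℕ} (f : Fin l → Fin n) (g : Fin m → Fin n) : Fin (l + m) → Fin n :=
  fun i => if h : (i : ℕ) < l then f ⟨i, h⟩ else g ⟨(i : ℕ) - l, by omega⟩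

lemma gR_castAdd {l m n : ℕ} (f : Fin l → Fin n) (g : Fin m → Fin n) (p : Fin l) :
    gR f g (Fin.castAdd m p) = f p := by
  simp [gR]

lemma gR_natAdd {l m n : ℕ} (f : Fin l → Fin n) (g : Fin m → Fin n) (s : Fin m) :
    gR f g (Fin.natAdd l s) = g s := by
  rw [gR]
  rw [dif_neg (by simp)]
  congr 1
  ext
  simp

lemma gR_strictMono {l m n : ℕ} {f : Fin l → Fin n} {g : Fin m → Fin n}
    (hf : StrictMono f) (hg : StrictMono g) (hfg : ∀ i j, f i < g j) :
    StrictMono (gR f g) := by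
  intro i j hij
  rw [Fin.lt_def] at hij
  unfold gR
  split <;> split
  · exact hf (by rwa [Fin.lt_def])
  · exact hfg _ _
  · omega
  · exact hg (by rw [Fin.lt_def]; simp; omega)

/-- glue along the column split at `b` inside `Fin (a+b)`. -/
def gC {a b n : ℕ} (f : Fin b → Fin n) (g : Fin a → Fin n) : Fin (a + b) → Fin n :=
  fun j => if h : (j : ℕ) < b then f ⟨j, h⟩ else g ⟨(j : ℕ) - b, by omega⟩

lemma gC_cL {a b n : ℕ} (f : Fin b → Fin n) (g : Fin a → Fin n) (t : Fin b) :
    gC f g (cL t) = f t := by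
  simp [gC, cL]

lemma gC_cR {a b n : ℕ} (f : Fin b → Fin n) (g : Fin a → Fin n) (q : Fin a) :
    gC f g (cR q) = g q := by
  rw [gC]
  rw [dif_neg (by simp [cR])]
  congr 1
  ext
  simp [cR]

lemma gC_strictMono {a b n : ℕ} {f : Fin b → Fin n} {g : Fin a → Fin n}
    (hf : StrictMono f) (hg : StrictMono g) (hfg : ∀ i j, f i < g j) :
    StrictMono (gC f g) := by
  intro i j hij
  rw [Fin.lt_def] at hij
  unfold gC
  split <;> split
  · exact hf (by rwa [Fin.lt_def])
  · exact hfg _ _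
  · omega
  · exact hg (by rw [Fin.lt_def]; simp; omega)

lemma row_unique {n : ℕ} {M : Matrix (Fin n) (Fin n) ℤ} (hM : IsSignedPermMatrix M)
    {i j j' : Fin n} (h : M i j ≠ 0) (h' : M i j' ≠ 0) : j = j' := by
  obtain ⟨w, -, hu⟩ := hM.2.1 i
  rw [hu j h, hu j' h']

lemma col_unique {n : ℕ} {M : Matrix (Fin n) (Fin n) ℤ} (hM : IsSignedPermMatrix M)
    {i i' j : Fin n} (h : M i j ≠ 0) (h' : M i' j ≠ 0) : i = i' := by
  obtain ⟨w, -, hu⟩ := hM.2.2 j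
  rw [hu i h, hu i' h']

lemma symm_apply {n : ℕ} {M : Matrix (Fin n) (Fin n) ℤ} (hs : M.IsSymm) (i j : Fin n) :
    M i j = M j i := by
  conv_lhs => rw [← hs]
  exact Matrix.transpose_apply M i j

----------------------------------------------------------------
-- frames and the flip map
----------------------------------------------------------------

/-- the cell `(i,j)` is framed by an occurrence of `χ₁`. -/
def Fr {n a : ℕ} (χ₁ : Matrix (Fin a) (Fin a) ℤ) (M : Matrix (Fin n) (Fin n) ℤ)
    (i j : Fin n) : Prop :=
  ∃ x y : Fin a → Fin n, StrictMono x ∧ StrictMono y ∧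
    (∀ p, x p < i) ∧ (∀ p, x p < j) ∧ (∀ q, i < y q) ∧ (∀ q, j < y q) ∧
    (∀ p q, M (x p) (y q) = χ₁ p q)

open scoped Classical in
/-- flip signs of all framed cells. -/
noncomputable def flipM {n a : ℕ} (χ₁ : Matrix (Fin a) (Fin a) ℤ)
    (M : Matrix (Fin n) (Fin n) ℤ) : Matrix (Fin n) (Fin n) ℤ :=
  Matrix.of fun i j => if Fr χ₁ M i j then -M i j else M i j

open scoped Classical in
lemma flip_apply {n a : ℕ} (χ₁ : Matrix (Fin a) (Fin a) ℤ) (M : Matrix (Fin n) (Fin n) ℤ)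
    (i j : Fin n) : flipM χ₁ M i j = if Fr χ₁ M i j then -M i j else M i j := rfl

lemma fr_symm {n a : ℕ} {χ₁ : Matrix (Fin a) (Fin a) ℤ} {M : Matrix (Fin n) (Fin n) ℤ}
    {i j : Fin n} (h : Fr χ₁ M i j) : Fr χ₁ M j i := by
  obtain ⟨x, y, hx, hy, h1, h2, h3, h4, h5⟩ := h
  exact ⟨x, y, hx, hy, h2, h1, h4, h3, h5⟩

/-- a "good" frame: its cells are themselves unframed. -/
def GFr {n a : ℕ} (χ₁ : Matrix (Fin a) (Fin a) ℤ) (M : Matrix (Fin n) (Fin n) ℤ)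
    (i j : Fin n) : Prop :=
  ∃ x y : Fin a → Fin n, StrictMono x ∧ StrictMono y ∧
    (∀ p, x p < i) ∧ (∀ p, x p < j) ∧ (∀ q, i < y q) ∧ (∀ q, j < y q) ∧
    (∀ p q, M (x p) (y q) = χ₁ p q ∧ ¬ Fr χ₁ M (x p) (y q))

lemma fr_good_aux {n a : ℕ} {χ₁ : Matrix (Fin a) (Fin a) ℤ} {M : Matrix (Fin n) (Fin n) ℤ} :
    ∀ N : ℕ, ∀ i j : Fin n, ∀ x y : Fin a → Fin n, StrictMono x → StrictMono y →
    (∀ p, x p < i) → (∀ p, x p < j) → (∀ q, i < y q) → (∀ q, j < y q) →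
    (∀ p q, M (x p) (y q) = χ₁ p q) → (∀ p, (x p : ℕ) < N) → GFr χ₁ M i j := by
  intro N
  induction N using Nat.strong_induction_on with
  | _ N IH =>
    intro i j x y hx hy hxi hxj hyi hyj hcell hN
    by_cases hfl : ∀ p q, ¬ Fr χ₁ M (x p) (y q)
    · exact ⟨x, y, hx, hy, hxi, hxj, hyi, hyj, fun p q => ⟨hcell p q, hfl p q⟩⟩
    · push_neg at hfl
      obtain ⟨p, q, hpq⟩ := hfl
      obtain ⟨x', y', hx', hy', h1, h2, h3, h4, hc'⟩ := hpq
      exact IH (x p : ℕ) (hN p) i j x' y' hx' hy'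
        (fun p' => lt_trans (h1 p') (hxi p)) (fun p' => lt_trans (h1 p') (hxj p))
        (fun q' => lt_trans (hyi q) (h4 q')) (fun q' => lt_trans (hyj q) (h4 q'))
        hc' (fun p' => h1 p')

lemma fr_good {n a : ℕ} {χ₁ : Matrix (Fin a) (Fin a) ℤ} {M : Matrix (Fin n) (Fin n) ℤ}
    {i j : Fin n} (h : Fr χ₁ M i j) : GFr χ₁ M i j := by
  obtain ⟨x, y, hx, hy, h1, h2, h3, h4, h5⟩ := h
  exact fr_good_aux n i j x y hx hy h1 h2 h3 h4 h5 (fun p => (x p).isLt)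

lemma gfr_fr {n a : ℕ} {χ₁ : Matrix (Fin a) (Fin a) ℤ} {M : Matrix (Fin n) (Fin n) ℤ}
    {i j : Fin n} (h : GFr χ₁ M i j) : Fr χ₁ M i j := by
  obtain ⟨x, y, hx, hy, h1, h2, h3, h4, h5⟩ := h
  exact ⟨x, y, hx, hy, h1, h2, h3, h4, fun p q => (h5 p q).1⟩

lemma gfr_fr_flip {n a : ℕ} {χ₁ : Matrix (Fin a) (Fin a) ℤ} {M : Matrix (Fin n) (Fin n) ℤ}
    {i j : Fin n} (h : GFr χ₁ M i j) : Fr χ₁ (flipM χ₁ M) i j := by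
  obtain ⟨x, y, hx, hy, h1, h2, h3, h4, h5⟩ := h
  refine ⟨x, y, hx, hy, h1, h2, h3, h4, fun p q => ?_⟩
  rw [flip_apply, if_neg (h5 p q).2]
  exact (h5 p q).1

lemma fr_flip_aux {n a : ℕ} {χ₁ : Matrix (Fin a) (Fin a) ℤ} {M : Matrix (Fin n) (Fin n) ℤ} :
    ∀ N : ℕ, ∀ i j : Fin n, ∀ x y : Fin a → Fin n, StrictMono x → StrictMono y →
    (∀ p, x p < i) → (∀ p, x p < j) → (∀ q, i < y q) → (∀ q, j < y q) →
    (∀ p q, flipM χ₁ M (x p) (y q) = χ₁ p q) → (∀ p, (x p : ℕ) < N) → Fr χ₁ M i j := by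
  intro N
  induction N using Nat.strong_induction_on with
  | _ N IH =>
    intro i j x y hx hy hxi hxj hyi hyj hcell hN
    by_cases hfl : ∀ p q, ¬ Fr χ₁ M (x p) (y q)
    · refine ⟨x, y, hx, hy, hxi, hxj, hyi, hyj, fun p q => ?_⟩
      have := hcell p q
      rwa [flip_apply, if_neg (hfl p q)] at this
    · push_neg at hfl
      obtain ⟨p, q, hpq⟩ := hfl
      obtain ⟨x', y', hx', hy', h1, h2, h3, h4, hc'⟩ := fr_good hpq
      exact IH (x p : ℕ) (hN p) i j x' y' hx' hy'
        (fun p' => lt_trans (h1 p') (hxi p)) (fun p' => lt_trans (h1 p') (hxj p))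
        (fun q' => lt_trans (hyi q) (h4 q')) (fun q' => lt_trans (hyj q) (h4 q'))
        (fun p' q' => by rw [flip_apply, if_neg (hc' p' q').2]; exact (hc' p' q').1)
        (fun p' => h1 p')

lemma fr_flip {n a : ℕ} (χ₁ : Matrix (Fin a) (Fin a) ℤ) (M : Matrix (Fin n) (Fin n) ℤ)
    (i j : Fin n) : Fr χ₁ (flipM χ₁ M) i j ↔ Fr χ₁ M i j := by
  constructor
  · rintro ⟨x, y, hx, hy, h1, h2, h3, h4, h5⟩
    exact fr_flip_aux n i j x y hx hy h1 h2 h3 h4 h5 (fun p => (x p).isLt)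
  · intro h
    exact gfr_fr_flip (fr_good h)

lemma flip_flip {n a : ℕ} (χ₁ : Matrix (Fin a) (Fin a) ℤ) (M : Matrix (Fin n) (Fin n) ℤ) :
    flipM χ₁ (flipM χ₁ M) = M := by
  ext i j
  rw [flip_apply]
  by_cases h : Fr χ₁ M i j
  · rw [if_pos ((fr_flip χ₁ M i j).mpr h), flip_apply, if_pos h, neg_neg]
  · rw [if_neg (fun hh => h ((fr_flip χ₁ M i j).mp hh)), flip_apply, if_neg h]

lemma flip_injective {n a : ℕ} (χ₁ : Matrix (Fin a) (Fin a) ℤ) :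
    Function.Injective (flipM (n := n) χ₁) :=
  Function.LeftInverse.injective (flip_flip χ₁)

lemma flip_isSymm {n a : ℕ} (χ₁ : Matrix (Fin a) (Fin a) ℤ) {M : Matrix (Fin n) (Fin n) ℤ}
    (hs : M.IsSymm) : (flipM χ₁ M).IsSymm := by
  rw [Matrix.IsSymm]
  ext i j
  rw [Matrix.transpose_apply, flip_apply, flip_apply]
  by_cases h : Fr χ₁ M i j
  · rw [if_pos h, if_pos (fr_symm h), symm_apply hs j i]
  · rw [if_neg h, if_neg (fun h' => h (fr_symm h')), symm_apply hs j i]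

lemma flip_ne_zero {n a : ℕ} (χ₁ : Matrix (Fin a) (Fin a) ℤ) (M : Matrix (Fin n) (Fin n) ℤ)
    (i j : Fin n) : flipM χ₁ M i j ≠ 0 ↔ M i j ≠ 0 := by
  rw [flip_apply]
  by_cases h : Fr χ₁ M i j
  · rw [if_pos h, neg_ne_zero]
  · rw [if_neg h]

lemma flip_sp {n a : ℕ} (χ₁ : Matrix (Fin a) (Fin a) ℤ) {M : Matrix (Fin n) (Fin n) ℤ}
    (hM : IsSignedPermMatrix M) : IsSignedPermMatrix (flipM χ₁ M) := by
  refine ⟨fun i j => ?_, fun i => ?_, fun j => ?_⟩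
  · rw [flip_apply]
    rcases hM.1 i j with h | h | h <;> rw [h] <;> by_cases hf : Fr χ₁ M i j <;>
      simp [hf]
  · obtain ⟨j₀, hj₀, hu⟩ := hM.2.1 i
    exact ⟨j₀, (flip_ne_zero χ₁ M i j₀).mpr hj₀,
      fun y hy => hu y ((flip_ne_zero χ₁ M i y).mp hy)⟩
  · obtain ⟨i₀, hi₀, hu⟩ := hM.2.2 j
    exact ⟨i₀, (flip_ne_zero χ₁ M i₀ j).mpr hi₀,
      fun y hy => hu y ((flip_ne_zero χ₁ M y j).mp hy)⟩

----------------------------------------------------------------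
-- symmetric occurrences
----------------------------------------------------------------

/-- a symmetric occurrence of `σ`'s doubling. -/
def SymOcc {n k : ℕ} (M : Matrix (Fin n) (Fin n) ℤ) (σ : Matrix (Fin k) (Fin k) ℤ) : Prop :=
  ∃ u v : Fin k → Fin n, StrictMono u ∧ StrictMono v ∧ (∀ i j, u i < v j) ∧
    ∀ i j, M (u i) (v j) = σ i j

lemma symOcc_of_contains {n k : ℕ} {M : Matrix (Fin n) (Fin n) ℤ}
    {σ : Matrix (Fin k) (Fin k) ℤ} (hs : M.IsSymm)
    (hc : ContainsPattern M (primePat σ)) : SymOcc M σ := by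
  obtain ⟨r, c, hr, hc', hrc⟩ := hc
  rcases Nat.eq_zero_or_pos k with hk | hk
  · subst hk
    exact ⟨Fin.elim0, Fin.elim0, fun i => i.elim0, fun i => i.elim0,
      fun i => i.elim0, fun i => i.elim0⟩
  · set L : Fin k := ⟨k - 1, by omega⟩ with hL
    set Z : Fin k := ⟨0, hk⟩ with hZ
    have hLZ : (Fin.castAdd k L : Fin (k + k)) < Fin.natAdd k Z := by
      rw [Fin.lt_def]; simp; omega
    by_cases hcase : r (Fin.castAdd k L) < c (Fin.natAdd k Z)
    · refine ⟨fun i => r (Fin.castAdd k i), fun j => c (Fin.natAdd k j),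
        fun i j hij => hr (by simp only [Fin.lt_def, Fin.coe_castAdd] at hij ⊢; exact hij),
        fun i j hij => hc' (by simp only [Fin.lt_def, Fin.coe_natAdd] at hij ⊢; omega), fun i j => ?_, fun i j => ?_⟩
      · calc r (Fin.castAdd k i) ≤ r (Fin.castAdd k L) := by
              apply hr.monotone; have := i.isLt; simp only [Fin.le_def, Fin.coe_castAdd]; show (i : ℕ) ≤ k - 1; omega
          _ < c (Fin.natAdd k Z) := hcase
          _ ≤ c (Fin.natAdd k j) := by
              apply hc'.monotone; simp only [Fin.le_def, Fin.coe_natAdd]; show k + 0 ≤ k + (j : ℕ); omega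
      · rw [hrc, pp_apply₁₂]
    · push_neg at hcase
      have hkey : c (Fin.castAdd k L) < r (Fin.natAdd k Z) :=
        lt_of_lt_of_le (lt_of_lt_of_le (hc' hLZ) hcase) (le_of_lt (hr hLZ))
      refine ⟨fun i => c (Fin.castAdd k i), fun j => r (Fin.natAdd k j),
        fun i j hij => hc' (by simp only [Fin.lt_def, Fin.coe_castAdd] at hij ⊢; exact hij),
        fun i j hij => hr (by simp only [Fin.lt_def, Fin.coe_natAdd] at hij ⊢; omega), fun i j => ?_, fun i j => ?_⟩
      · calc c (Fin.castAdd k i) ≤ c (Fin.castAdd k L) := by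
              apply hc'.monotone; have := i.isLt; simp only [Fin.le_def, Fin.coe_castAdd]; show (i : ℕ) ≤ k - 1; omega
          _ < r (Fin.natAdd k Z) := hkey
          _ ≤ r (Fin.natAdd k j) := by
              apply hr.monotone; simp only [Fin.le_def, Fin.coe_natAdd]; show k + 0 ≤ k + (j : ℕ); omega
      · rw [symm_apply hs, hrc, pp_apply₂₁]

lemma contains_of_symOcc {n k : ℕ} {M : Matrix (Fin n) (Fin n) ℤ}
    {σ : Matrix (Fin k) (Fin k) ℤ} (hM : IsSignedPermMatrix M) (hs : M.IsSymm)
    (hrow : ∀ i, ∃ j, σ i j ≠ 0) (hcol : ∀ j, ∃ i, σ i j ≠ 0)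
    (ho : SymOcc M σ) : ContainsPattern M (primePat σ) := by
  obtain ⟨u, v, hu, hv, huv, hcell⟩ := ho
  refine ⟨gR u v, gR u v, gR_strictMono hu hv huv, gR_strictMono hu hv huv, fun A B => ?_⟩
  rcases row_split A with ⟨i, rfl⟩ | ⟨i, rfl⟩ <;> rcases row_split B with ⟨j, rfl⟩ | ⟨j, rfl⟩
  · rw [gR_castAdd, gR_castAdd, pp_apply₁₁]
    obtain ⟨j₀, hj₀⟩ := hrow i
    have hnz : M (u i) (v j₀) ≠ 0 := by rw [hcell]; exact hj₀
    by_contra h0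
    exact absurd (row_unique hM h0 hnz) (ne_of_lt (huv j j₀))
  · rw [gR_castAdd, gR_natAdd, pp_apply₁₂, hcell]
  · rw [gR_natAdd, gR_castAdd, pp_apply₂₁, symm_apply hs, hcell]
  · rw [gR_natAdd, gR_natAdd, pp_apply₂₂]
    obtain ⟨i₀, hi₀⟩ := hcol j
    have hnz : M (u i₀) (v j) ≠ 0 := by rw [hcell]; exact hi₀
    by_contra h0
    exact absurd (col_unique hM h0 hnz) (ne_of_gt (huv i₀ i))

end Stmt13Aux

namespace Stmt13Aux

section Main
variable {n a b : ℕ} {χ₁ : Matrix (Fin a) (Fin a) ℤ} {χ₂ : Matrix (Fin b) (Fin b) ℤ}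
  {M : Matrix (Fin n) (Fin n) ℤ}

lemma castAdd_sm : StrictMono (Fin.castAdd b : Fin a → Fin (a + b)) := fun i j h => by
  simp only [Fin.lt_def, Fin.coe_castAdd] at h ⊢; exact h

lemma natAdd_sm : StrictMono (Fin.natAdd a : Fin b → Fin (a + b)) := fun i j h => by
  simp only [Fin.lt_def, Fin.coe_natAdd] at h ⊢; omega

lemma cL_sm : StrictMono (cL : Fin b → Fin (a + b)) := fun i j h => by
  simp only [Fin.lt_def, cL] at h ⊢; exact h

lemma castAdd_lt_natAdd (p : Fin a) (s : Fin b) :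
    (Fin.castAdd b p) < Fin.natAdd a s := by
  have := p.isLt
  simp only [Fin.lt_def, Fin.coe_castAdd, Fin.coe_natAdd]; omega

lemma cL_lt_cR (t : Fin b) (q : Fin a) : (cL t : Fin (a + b)) < cR q := by
  have := t.isLt
  simp only [Fin.lt_def, cL, cR]; omega

lemma ab_row_ex {A : Matrix (Fin a) (Fin a) ℤ} {B : Matrix (Fin b) (Fin b) ℤ}
    (hA : ∀ p, ∃ q, A p q ≠ 0) (hB : ∀ s, ∃ t, B s t ≠ 0) :
    ∀ i : Fin (a + b), ∃ j, antiBlock2 A B i j ≠ 0 := by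
  intro i
  rcases row_split i with ⟨p, rfl⟩ | ⟨s, rfl⟩
  · obtain ⟨q, hq⟩ := hA p; exact ⟨cR q, by rw [ab_apply₁]; exact hq⟩
  · obtain ⟨t, ht⟩ := hB s; exact ⟨cL t, by rw [ab_apply₂]; exact ht⟩

lemma ab_col_ex {A : Matrix (Fin a) (Fin a) ℤ} {B : Matrix (Fin b) (Fin b) ℤ}
    (hA : ∀ q, ∃ p, A p q ≠ 0) (hB : ∀ t, ∃ s, B s t ≠ 0) :
    ∀ j : Fin (a + b), ∃ i, antiBlock2 A B i j ≠ 0 := by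
  intro j
  rcases col_split j with ⟨t, rfl⟩ | ⟨q, rfl⟩
  · obtain ⟨s, hs⟩ := hB t; exact ⟨Fin.natAdd a s, by rw [ab_apply₂]; exact hs⟩
  · obtain ⟨p, hp⟩ := hA q; exact ⟨Fin.castAdd b p, by rw [ab_apply₁]; exact hp⟩

lemma symOcc_flip_aux (h1 : IsSignedPermMatrix χ₁) (hM : IsSignedPermMatrix M) :
    ∀ N : ℕ, ∀ u v : Fin (a + b) → Fin n, StrictMono u → StrictMono v →
    (∀ i j, u i < v j) → (∀ i j, M (u i) (v j) = antiBlock2 χ₁ χ₂ i j) →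
    (∀ p : Fin a, (u (Fin.castAdd b p) : ℕ) < N) →
    SymOcc (flipM χ₁ M) (antiBlock2 χ₁ (-χ₂)) := by
  intro N
  induction N using Nat.strong_induction_on with
  | _ N IH =>
    intro u v hu hv huv hcell hN
    by_cases hfl : ∀ (p q : Fin a), ¬ Fr χ₁ M (u (Fin.castAdd b p)) (v (cR q))
    · refine ⟨u, v, hu, hv, huv, fun i j => ?_⟩
      rcases row_split i with ⟨p, rfl⟩ | ⟨s, rfl⟩ <;>
        rcases col_split j with ⟨t, rfl⟩ | ⟨q, rfl⟩
      · have h0 : M (u (Fin.castAdd b p)) (v (cL t)) = 0 := by rw [hcell, ab_apply₃]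
        rw [flip_apply, ab_apply₃, h0]
        split <;> simp
      · rw [flip_apply, if_neg (hfl p q), hcell, ab_apply₁, ab_apply₁]
      · have hFr : Fr χ₁ M (u (Fin.natAdd a s)) (v (cL t)) := by
          refine ⟨fun p' => u (Fin.castAdd b p'), fun q' => v (cR q'),
            hu.comp castAdd_sm, hv.comp (fun q₁ q₂ h => by
              simp only [Fin.lt_def, cR] at h ⊢; omega),
            fun p' => hu (castAdd_lt_natAdd p' s), fun p' => huv _ _,
            fun q' => huv _ _, fun q' => hv (cL_lt_cR t q'), fun p' q' => ?_⟩
          rw [hcell, ab_apply₁]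
        rw [flip_apply, if_pos hFr, hcell, ab_apply₂, ab_apply₂, Matrix.neg_apply]
      · have h0 : M (u (Fin.natAdd a s)) (v (cR q)) = 0 := by rw [hcell, ab_apply₄]
        rw [flip_apply, ab_apply₄, h0]
        split <;> simp
    · push_neg at hfl
      obtain ⟨p, q, hFr⟩ := hfl
      obtain ⟨x, y, hx, hy, hxi, hxj, hyi, hyj, hcells⟩ := hFr
      refine IH (u (Fin.castAdd b p) : ℕ) (hN p)
        (gR x (fun s => u (Fin.natAdd a s))) (gC (fun t => v (cL t)) y)
        (gR_strictMono hx (hu.comp natAdd_sm)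
          (fun p' s => lt_trans (hxi p') (hu (castAdd_lt_natAdd p s))))
        (gC_strictMono (hv.comp cL_sm) hy
          (fun t q' => lt_trans (hv (cL_lt_cR t q)) (hyj q')))
        (fun i j => ?_) (fun i j => ?_) (fun p' => ?_)
      · rcases row_split i with ⟨p', rfl⟩ | ⟨s, rfl⟩ <;>
          rcases col_split j with ⟨t, rfl⟩ | ⟨q', rfl⟩
        · rw [gR_castAdd, gC_cL]
          exact lt_trans (hxi p') (huv _ _)
        · rw [gR_castAdd, gC_cR]
          exact lt_trans (hxi p') (hyi q')
        · rw [gR_natAdd, gC_cL]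
          exact huv _ _
        · rw [gR_natAdd, gC_cR]
          exact lt_trans (huv _ (cR q)) (hyj q')
      · rcases row_split i with ⟨p', rfl⟩ | ⟨s, rfl⟩ <;>
          rcases col_split j with ⟨t, rfl⟩ | ⟨q', rfl⟩
        · rw [gR_castAdd, gC_cL, ab_apply₃]
          obtain ⟨q₀, hq₀, -⟩ := h1.2.1 p'
          have hnz : M (x p') (y q₀) ≠ 0 := by rw [hcells]; exact hq₀
          by_contra h0
          exact absurd (row_unique hM h0 hnz)
            (ne_of_lt (lt_trans (hv (cL_lt_cR t q)) (hyj q₀)))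
        · rw [gR_castAdd, gC_cR, ab_apply₁]
          exact hcells p' q'
        · rw [gR_natAdd, gC_cL, ab_apply₂, hcell, ab_apply₂]
        · rw [gR_natAdd, gC_cR, ab_apply₄]
          obtain ⟨p₀, hp₀, -⟩ := h1.2.2 q'
          have hnz : M (x p₀) (y q') ≠ 0 := by rw [hcells]; exact hp₀
          by_contra h0
          exact absurd (col_unique hM h0 hnz)
            (ne_of_gt (lt_trans (hxi p₀) (hu (castAdd_lt_natAdd p s))))
      · rw [gR_castAdd]
        exact hxi p'

lemma flip_contains (h1 : IsSignedPermMatrix χ₁)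
    (h2r : ∀ s, ∃ t, χ₂ s t ≠ 0) (h2c : ∀ t, ∃ s, χ₂ s t ≠ 0)
    (hM : IsSignedPermMatrix M) (hs : M.IsSymm)
    (hc : ContainsPattern M (primePat (antiBlock2 χ₁ χ₂))) :
    ContainsPattern (flipM χ₁ M) (primePat (antiBlock2 χ₁ (-χ₂))) := by
  obtain ⟨u, v, hu, hv, huv, hcell⟩ := symOcc_of_contains hs hc
  have hso : SymOcc (flipM χ₁ M) (antiBlock2 χ₁ (-χ₂)) :=
    symOcc_flip_aux h1 hM n u v hu hv huv hcell (fun p => (u _).isLt)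
  refine contains_of_symOcc (flip_sp χ₁ hM) (flip_isSymm χ₁ hs) ?_ ?_ hso
  · exact ab_row_ex (fun p => (h1.2.1 p).exists)
      (fun s => (h2r s).imp (fun t ht => by simpa using ht))
  · exact ab_col_ex (fun q => (h1.2.2 q).exists)
      (fun t => (h2c t).imp (fun s hsx => by simpa using hsx))

end Main

end Stmt13Aux

/-- [[0,0,0,χ₁],[0,0,χ₂,0],[0,χ₂ᵗ,0,0],[χ₁ᵗ,0,0,0]] and
[[0,0,0,χ₁],[0,0,−χ₂,0],[0,−χ₂ᵗ,0,0],[χ₁ᵗ,0,0,0]] are I-Wilf equivalent. -/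
theorem stmt13 {a b : ℕ} (χ₁ : Matrix (Fin a) (Fin a) ℤ) (χ₂ : Matrix (Fin b) (Fin b) ℤ)
    (h1 : IsSignedPermMatrix χ₁) (h2 : IsSignedPermMatrix χ₂) :
    ∀ n : ℕ, 1 ≤ n →
      SIAvoidCount n (primePat (antiBlock2 χ₁ χ₂)) =
      SIAvoidCount n (primePat (antiBlock2 χ₁ (-χ₂))) := by
  intro n _
  have h2r : ∀ s, ∃ t, χ₂ s t ≠ 0 := fun s => (h2.2.1 s).exists
  have h2c : ∀ t, ∃ s, χ₂ s t ≠ 0 := fun t => (h2.2.2 t).exists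
  have h2r' : ∀ s, ∃ t, (-χ₂) s t ≠ 0 := fun s =>
    (h2r s).imp (fun t ht => by simpa using ht)
  have h2c' : ∀ t, ∃ s, (-χ₂) s t ≠ 0 := fun t =>
    (h2c t).imp (fun s hs => by simpa using hs)
  set S := {M : Matrix (Fin n) (Fin n) ℤ |
    IsSignedPermMatrix M ∧ M.IsSymm ∧
      ¬ ContainsPattern M (primePat (antiBlock2 χ₁ χ₂))} with hS
  set S' := {M : Matrix (Fin n) (Fin n) ℤ |
    IsSignedPermMatrix M ∧ M.IsSymm ∧
      ¬ ContainsPattern M (primePat (antiBlock2 χ₁ (-χ₂)))} with hS'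
  have himg : Stmt13Aux.flipM χ₁ '' S = S' := by
    ext N
    constructor
    · rintro ⟨M, ⟨hMsp, hMsym, hMav⟩, rfl⟩
      refine ⟨Stmt13Aux.flip_sp χ₁ hMsp, Stmt13Aux.flip_isSymm χ₁ hMsym, fun hcon => hMav ?_⟩
      have := Stmt13Aux.flip_contains h1 h2r' h2c'
        (Stmt13Aux.flip_sp χ₁ hMsp) (Stmt13Aux.flip_isSymm χ₁ hMsym) hcon
      rwa [Stmt13Aux.flip_flip, neg_neg] at this
    · rintro ⟨hNsp, hNsym, hNav⟩
      refine ⟨Stmt13Aux.flipM χ₁ N,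
        ⟨Stmt13Aux.flip_sp χ₁ hNsp, Stmt13Aux.flip_isSymm χ₁ hNsym, fun hcon => hNav ?_⟩,
        Stmt13Aux.flip_flip χ₁ N⟩
      have := Stmt13Aux.flip_contains h1 h2r h2c
        (Stmt13Aux.flip_sp χ₁ hNsp) (Stmt13Aux.flip_isSymm χ₁ hNsym) hcon
      rwa [Stmt13Aux.flip_flip] at this
  calc SIAvoidCount n (primePat (antiBlock2 χ₁ χ₂)) = S.ncard := rfl
    _ = (Stmt13Aux.flipM χ₁ '' S).ncard :=
        (Set.ncard_image_of_injective S (Stmt13Aux.flip_injective χ₁)).symm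
    _ = S'.ncard := by rw [himg]
    _ = SIAvoidCount n (primePat (antiBlock2 χ₁ (-χ₂))) := rfl
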